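/- arXiv:2205.13721 — 2 statements merged into one kernel-verified Lean document; each statement's English description precedes it below -/
import Mathlib

section
/- Let (R, m) be a Noetherian local ring with infinite residue field and E a finitely generated R-module with rank e and analytic spread ℓ. Suppose E admits a proper reduction, U is a minimal reduction of E, and E_p is of linear type for all primes p with ht(p) ≤ ℓ − e. Then the ideal (U :_R E) has height at least ℓ − e + 1, i.e., (U :_R E) is an ℓ-residual intersection of E. -/
noncomputable section
open Submodule IsLocalRing

universe u

/-- Minimal number of generators of a module. -/
def Module.mu (R M : Type*) [Semiring R] [AddCommMonoid M] [Module R M] : ℕ :=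
  sInf {n | ∃ s : Finset M, s.card = n ∧ Submodule.span R (s : Set M) = ⊤}

/-- Minimal number of generators of a submodule. -/
def Submodule.mu {R M : Type*} [Semiring R] [AddCommMonoid M] [Module R M]
    (U : Submodule R M) : ℕ :=
  sInf {n | ∃ s : Finset M, s.card = n ∧ ↑s ⊆ (U : Set M) ∧ Submodule.span R (s : Set M) = U}

/-- Height of an ideal: infimum of heights of primes containing it. -/
def Ideal.ht {R : Type*} [CommRing R] (I : Ideal R) : ℕ∞ :=
  ⨅ p ∈ {p : PrimeSpectrum R | I ≤ p.asIdeal}, Order.height p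

/-- `M` has rank `e`: `M ⊗_R Quot(R)` is free of rank `e` over the total quotient ring. -/
def Module.HasRank (R M : Type*) [CommRing R] [AddCommGroup M] [Module R M] (e : ℕ) : Prop :=
  Nonempty (Basis (Fin e) (FractionRing R) (LocalizedModule (nonZeroDivisors R) M))

/-- Minimal number of generators of the localization of `M` at a prime `p`. -/
def Module.muAt {R : Type*} [CommRing R] (p : PrimeSpectrum R) (M : Type*) [AddCommGroup M]
    [Module R M] : ℕ :=
  Module.mu (Localization.AtPrime p.asIdeal) (LocalizedModule p.asIdeal.primeCompl M)

/-- The condition `G_s`: `μ(M_p) ≤ dim R_p + e - 1` for all primes with `1 ≤ ht p ≤ s - 1`. -/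
def Module.SatisfiesG {R : Type*} [CommRing R] (M : Type*) [AddCommGroup M] [Module R M]
    (e s : ℕ) : Prop :=
  ∀ p : PrimeSpectrum R, 1 ≤ Order.height p → Order.height p + 1 ≤ (s : ℕ∞) →
    (Module.muAt p M : ℕ∞) + 1 ≤ Order.height p + e

/-- Grade of an ideal on a module: supremum of lengths of `M`-regular sequences in `I`. -/
def Ideal.grade {R : Type*} [CommRing R] (I : Ideal R) (M : Type*) [AddCommGroup M]
    [Module R M] : ℕ∞ :=
  sSup {n : ℕ∞ | ∃ rs : List R, (rs.length : ℕ∞) = n ∧ (∀ r ∈ rs, r ∈ I) ∧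
    RingTheory.Sequence.IsRegular M rs}

/-- Depth of a module over a local ring. -/
def Module.depth (R M : Type*) [CommRing R] [IsLocalRing R] [AddCommGroup M] [Module R M] : ℕ∞ :=
  (IsLocalRing.maximalIdeal R).grade M

/-- Cohen-Macaulay local ring: Noetherian local with depth equal to Krull dimension. -/
def IsCMLocalRing (R : Type*) [CommRing R] [IsLocalRing R] : Prop :=
  IsNoetherianRing R ∧ (Module.depth R R : WithBot ℕ∞) = ringKrullDim R

/-- Cohen-Macaulay ring: Noetherian and all localizations at primes are CM local rings. -/
def IsCMRing (R : Type*) [CommRing R] : Prop :=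
  IsNoetherianRing R ∧ ∀ p : PrimeSpectrum R,
    letI := p.2
    IsCMLocalRing (Localization.AtPrime p.asIdeal)

/-- Projective dimension at most `n`. -/
def ProjDimLE (R : Type u) [CommRing R] : ℕ → ∀ (M : Type u) [AddCommGroup M] [Module R M], Prop
  | 0 => fun M _ _ => Module.Projective R M
  | n+1 => fun M _ _ => ∃ (P : Type u) (_ : AddCommGroup P) (_ : Module R P) (f : P →ₗ[R] M),
      Module.Projective R P ∧ Function.Surjective f ∧ ProjDimLE R n (LinearMap.ker f)

/-- Injective dimension at most `n`. -/
def InjDimLE (R : Type u) [CommRing R] : ℕ → ∀ (M : Type u) [AddCommGroup M] [Module R M], Prop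
  | 0 => fun M _ _ => Module.Injective R M
  | n+1 => fun M _ _ => ∃ (N : Type u) (_ : AddCommGroup N) (_ : Module R N) (f : M →ₗ[R] N),
      Module.Injective R N ∧ Function.Injective f ∧ InjDimLE R n (N ⧸ LinearMap.range f)

/-- Gorenstein local ring: Noetherian local ring of finite self-injective dimension. -/
def IsGorensteinLocalRing (R : Type u) [CommRing R] [IsLocalRing R] : Prop :=
  IsNoetherianRing R ∧ ∃ n : ℕ, InjDimLE R n R

/-- Vanishing of `Ext_R^n(M, N)`. -/
def ExtVanishes (R : Type u) [CommRing R] (M N : Type u) [AddCommGroup M] [Module R M]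
    [AddCommGroup N] [Module R N] (n : ℕ) : Prop :=
  Subsingleton ((((_root_.Ext R (ModuleCat.{u} R) n).obj
    (Opposite.op (ModuleCat.of R M))).obj (ModuleCat.of R N)))

section Rees
variable {R : Type u} [CommRing R]

/-- The linear embedding of `R^m` as the degree-one part of `R[X_1,…,X_m]`. -/
def toPoly (R : Type u) [CommRing R] (m : ℕ) : (Fin m → R) →ₗ[R] MvPolynomial (Fin m) R :=
  (Finsupp.linearCombination R MvPolynomial.X).comp
    (Finsupp.linearEquivFunOnFinite R R (Fin m)).symm.toLinearMap

/-- The Rees algebra of a module `E ⊆ R^m` with a rank: the `R`-subalgebra of the polynomial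
ring generated by the degree-one image of `E` (à la Eisenbud–Huneke–Ulrich). -/
def reesAlg {m : ℕ} (E : Submodule R (Fin m → R)) : Subalgebra R (MvPolynomial (Fin m) R) :=
  Algebra.adjoin R (toPoly R m '' E)

/-- `U` is a reduction of `E`: `U ≤ E` and the Rees algebra of `E` is integral over the
subalgebra generated by `U`. -/
def IsReductionOf {m : ℕ} (U E : Submodule R (Fin m → R)) : Prop :=
  U ≤ E ∧ ∀ x ∈ reesAlg E, IsIntegral (reesAlg U) x

/-- `U` is a minimal reduction of `E`. -/
def IsMinimalReductionOf {m : ℕ} (U E : Submodule R (Fin m → R)) : Prop :=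
  IsReductionOf U E ∧ ∀ V : Submodule R (Fin m → R), IsReductionOf V E → V ≤ U → V = U

/-- The core of `E`: the intersection of all (minimal) reductions of `E`. -/
def coreMod {m : ℕ} (E : Submodule R (Fin m → R)) : Submodule R (Fin m → R) :=
  sInf {U | IsReductionOf U E}

/-- The analytic spread of `E`: the Krull dimension of the special fiber ring
`k ⊗_R R(E)` of the Rees algebra of `E`. -/
def analyticSpread [IsLocalRing R] {m : ℕ} (E : Submodule R (Fin m → R)) : WithBot ℕ∞ :=
  ringKrullDim (↥(reesAlg E) ⧸ (Ideal.map (algebraMap R ↥(reesAlg E))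
    (IsLocalRing.maximalIdeal R)))

/-- The `j`-th Rees power `E^j`: the degree-`j` graded component of the Rees algebra. -/
def reesPow {m : ℕ} (E : Submodule R (Fin m → R)) (j : ℕ) :
    Submodule R (MvPolynomial (Fin m) R) :=
  Subalgebra.toSubmodule (reesAlg E) ⊓ MvPolynomial.homogeneousSubmodule (Fin m) R j

/-- The algebra map `R[Y_1,…,Y_q] → R[X_1,…,X_m]` induced by generators `g` of a submodule. -/
def mapOfGens {m : ℕ} (q : ℕ) (g : Fin q → (Fin m → R)) :
    MvPolynomial (Fin q) R →ₐ[R] MvPolynomial (Fin m) R :=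
  MvPolynomial.aeval fun j => toPoly R m (g j)

/-- The linear map `R^q → R^m` given by `v ↦ ∑ v_j g_j`. -/
def funComb {m : ℕ} (q : ℕ) (g : Fin q → (Fin m → R)) : (Fin q → R) →ₗ[R] (Fin m → R) :=
  (Finsupp.linearCombination R g).comp
    (Finsupp.linearEquivFunOnFinite R R (Fin q)).symm.toLinearMap

/-- `E` is of linear type: for every generating set, the defining ideal of its Rees algebra
is generated by the linear forms coming from the syzygies (i.e. `Sym(E) = R(E)`). -/
def IsLinearTypeSub {m : ℕ} (E : Submodule R (Fin m → R)) : Prop :=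
  ∀ (q : ℕ) (g : Fin q → (Fin m → R)), Submodule.span R (Set.range g) = E →
    RingHom.ker (mapOfGens q g).toRingHom =
      Ideal.span (toPoly R q '' (LinearMap.ker (funComb q g) : Set (Fin q → R)))

/-- The localization `E_p ⊆ R_p^m` of a submodule `E ⊆ R^m` at a prime `p`. -/
def locSub (p : PrimeSpectrum R) {m : ℕ} (E : Submodule R (Fin m → R)) :
    Submodule (Localization.AtPrime p.asIdeal) (Fin m → Localization.AtPrime p.asIdeal) :=
  Submodule.span (Localization.AtPrime p.asIdeal)
    ((fun (v : Fin m → R) (i : Fin m) => algebraMap R (Localization.AtPrime p.asIdeal) (v i)) ''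
      (E : Set (Fin m → R)))

/-- Orientability: `(∧^e M)^{**} ≅ R`. -/
def IsOrientable (R : Type u) [CommRing R] (M : Type u) [AddCommGroup M] [Module R M]
    (e : ℕ) : Prop :=
  Nonempty ((Module.Dual R (Module.Dual R (⋀[R]^e M))) ≃ₗ[R] R)

end Rees


section Helpers

theorem toPoly_apply' {R : Type u} [CommRing R] {m : ℕ} (v : Fin m → R) :
    toPoly R m v = ∑ i : Fin m, MvPolynomial.C (v i) * MvPolynomial.X i := by
  classical
  rw [toPoly]
  simp only [LinearMap.comp_apply, LinearEquiv.coe_toLinearMap, Finsupp.linearCombination_apply]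
  rw [Finsupp.sum_fintype ((Finsupp.linearEquivFunOnFinite R R (Fin m)).symm v)
    (fun i a => a • MvPolynomial.X i) (fun i => zero_smul R _)]
  refine Finset.sum_congr rfl fun i _ => ?_
  rw [MvPolynomial.smul_eq_C_mul]
  rfl

theorem funComb_apply' {R : Type u} [CommRing R] {m q : ℕ} (g : Fin q → (Fin m → R))
    (v : Fin q → R) : funComb q g v = ∑ j : Fin q, v j • g j := by
  classical
  rw [funComb]
  simp only [LinearMap.comp_apply, LinearEquiv.coe_toLinearMap, Finsupp.linearCombination_apply]
  rw [Finsupp.sum_fintype ((Finsupp.linearEquivFunOnFinite R R (Fin q)).symm v)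
    (fun i a => a • g i) (fun i => zero_smul R _)]
  rfl

theorem map_toPoly {R S : Type u} [CommRing R] [CommRing S] (φ : R →+* S) {m : ℕ}
    (v : Fin m → R) :
    MvPolynomial.map φ (toPoly R m v) = toPoly S m (fun i => φ (v i)) := by
  rw [toPoly_apply', toPoly_apply', map_sum]
  simp

theorem eval₂_zero_vars {R S : Type*} [CommRing R] [CommRing S] (f : R →+* S) {σ : Type*}
    (p : MvPolynomial σ R) :
    MvPolynomial.eval₂ f (fun _ => 0) p = f (MvPolynomial.constantCoeff p) := by
  induction p using MvPolynomial.induction_on with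
  | C a => simp
  | add p q hp hq => simp [MvPolynomial.eval₂_add, hp, hq]
  | mul_X p i hp => simp [MvPolynomial.eval₂_mul, hp]

theorem mem_span_loc {R : Type u} [CommRing R] (p : PrimeSpectrum R) {m : ℕ}
    (N : Submodule R (Fin m → R)) (x : Fin m → R)
    (hx : (fun i => algebraMap R (Localization.AtPrime p.asIdeal) (x i)) ∈
      Submodule.span (Localization.AtPrime p.asIdeal)
        ((fun (v : Fin m → R) (i : Fin m) =>
          algebraMap R (Localization.AtPrime p.asIdeal) (v i)) '' N)) :
    ∃ s : p.asIdeal.primeCompl, (s : R) • x ∈ N := by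
  classical
  set S := Localization.AtPrime p.asIdeal
  set loc : (Fin m → R) → (Fin m → S) := fun v i => algebraMap R S (v i) with hloc
  have key : ∀ z ∈ Submodule.span S (loc '' N),
      ∃ s : p.asIdeal.primeCompl, ∃ y ∈ N, (s : R) • z = loc y := by
    intro z hz
    induction hz using Submodule.span_induction with
    | mem z hzmem =>
      obtain ⟨y, hy, rfl⟩ := hzmem
      exact ⟨1, y, hy, one_smul _ _⟩
    | zero => exact ⟨1, 0, N.zero_mem, by simp [hloc]; rfl⟩
    | add z w _ _ hz hw =>
      obtain ⟨s, y, hy, hsy⟩ := hz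
      obtain ⟨t, w', hw', htw⟩ := hw
      refine ⟨s * t, (t : R) • y + (s : R) • w', N.add_mem (N.smul_mem _ hy) (N.smul_mem _ hw'),
        ?_⟩
      funext i
      have h1 := congrFun hsy i
      have h2 := congrFun htw i
      simp only [Pi.smul_apply, Algebra.smul_def] at h1 h2
      show ((↑(s * t) : R)) • (z i + w i) = algebraMap R S (((t : R) • y + (s : R) • w') i)
      rw [Algebra.smul_def, Submonoid.coe_mul, map_mul, Pi.add_apply, Pi.smul_apply,
        Pi.smul_apply, map_add, smul_eq_mul, smul_eq_mul, map_mul, map_mul]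
      calc (algebraMap R S s * algebraMap R S t) * (z i + w i)
          = algebraMap R S t * (algebraMap R S s * z i)
            + algebraMap R S s * (algebraMap R S t * w i) := by ring
        _ = _ := by rw [h1, h2]
    | smul a z _ hz =>
      obtain ⟨s, y, hy, hsy⟩ := hz
      obtain ⟨⟨r, t⟩, hrt⟩ := IsLocalization.mk'_surjective p.asIdeal.primeCompl a
      refine ⟨t * s, r • y, N.smul_mem _ hy, ?_⟩
      funext i
      have h1 := congrFun hsy i
      simp only [Pi.smul_apply, Algebra.smul_def] at h1
      have hts : a * algebraMap R S t = algebraMap R S r := by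
        rw [← hrt]
        exact IsLocalization.mk'_spec S r t
      show ((↑(t * s) : R)) • (a • z i) = algebraMap R S ((r • y) i)
      have h1' : algebraMap R S (s : R) * z i = algebraMap R S (y i) := h1
      have e1 : ((↑(t * s) : R)) • (a • z i)
          = algebraMap R S ↑t * algebraMap R S ↑s * (a * z i) := by
        rw [Algebra.smul_def, Submonoid.coe_mul, map_mul, smul_eq_mul]
      have e2 : algebraMap R S ((r • y) i) = algebraMap R S r * algebraMap R S (y i) := by
        rw [Pi.smul_apply, smul_eq_mul, map_mul]
      rw [e1, e2]
      linear_combination (algebraMap R S ↑s * z i) * hts + (algebraMap R S r) * h1'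
  obtain ⟨s, y, hy, hsy⟩ := key _ hx
  have hz : ∀ i : Fin m, algebraMap R S ((s : R) * x i - y i) = 0 := by
    intro i
    have := congrFun hsy i
    simp only [Pi.smul_apply, Algebra.smul_def, smul_eq_mul] at this
    rw [map_sub, map_mul, this, sub_self]
  have hts : ∀ i : Fin m, ∃ t : p.asIdeal.primeCompl, (t : R) * ((s : R) * x i - y i) = 0 := by
    intro i
    obtain ⟨t, ht⟩ := (IsLocalization.map_eq_zero_iff p.asIdeal.primeCompl S _).mp (hz i)
    exact ⟨t, ht⟩
  choose tt htt using hts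
  refine ⟨(∏ i : Fin m, tt i) * s, ?_⟩
  have hkey : ((∏ i : Fin m, tt i : p.asIdeal.primeCompl) : R) • ((s : R) • x - y) = 0 := by
    funext i
    obtain ⟨d, hd⟩ := Finset.dvd_prod_of_mem (fun i => ((tt i : p.asIdeal.primeCompl) : R))
      (Finset.mem_univ i)
    have hcast : ((∏ j : Fin m, tt j : p.asIdeal.primeCompl) : R) = (tt i : R) * d := by
      push_cast
      exact hd
    simp only [Pi.smul_apply, Pi.sub_apply, smul_eq_mul, Pi.zero_apply]
    rw [hcast, mul_comm ((tt i : R)) d, mul_assoc, htt i, mul_zero]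
  have heq : (((∏ i : Fin m, tt i) * s : p.asIdeal.primeCompl) : R) • x
      - ((∏ i : Fin m, tt i : p.asIdeal.primeCompl) : R) • y = 0 := by
    rw [← hkey]
    push_cast
    funext i
    simp only [Pi.smul_apply, Pi.sub_apply, smul_eq_mul]
    ring
  have hfin : (((∏ i : Fin m, tt i) * s : p.asIdeal.primeCompl) : R) • x
      = ((∏ i : Fin m, tt i : p.asIdeal.primeCompl) : R) • y := sub_eq_zero.mp heq
  rw [hfin]
  exact N.smul_mem _ hy

set_option maxHeartbeats 2000000 in
theorem key_no_small_prime {R : Type u} [CommRing R] [IsNoetherianRing R]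
    {m : ℕ} {E U : Submodule R (Fin m → R)} (hUE : U ≤ E)
    (hint : ∀ x ∈ reesAlg E, IsIntegral (reesAlg U) x)
    (p : PrimeSpectrum R) (hple : U.colon E ≤ p.asIdeal)
    (hlin : IsLinearTypeSub (locSub p E)) : False := by
  classical
  set S := Localization.AtPrime p.asIdeal with hS
  obtain ⟨t, uu, huu⟩ := Submodule.fg_iff_exists_fin_generating_family.mp
    (IsNoetherian.noetherian U)
  obtain ⟨r, f, hff⟩ := Submodule.fg_iff_exists_fin_generating_family.mp
    (IsNoetherian.noetherian E)
  set g : Fin (t + r) → (Fin m → R) := Fin.append uu f with hg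
  have hgu : ∀ j : Fin t, g (Fin.castAdd r j) = uu j := fun j => Fin.append_left _ _ j
  have hgf : ∀ i : Fin r, g (Fin.natAdd t i) = f i := fun i => Fin.append_right _ _ i
  have huU : ∀ j, uu j ∈ U := fun j => huu ▸ Submodule.subset_span ⟨j, rfl⟩
  have hfE : ∀ i, f i ∈ E := fun i => hff ▸ Submodule.subset_span ⟨i, rfl⟩
  have hgE : ∀ j, g j ∈ E := by
    intro j
    refine Fin.addCases (fun j' => ?_) (fun i => ?_) j
    · rw [hgu]; exact hUE (huU j')
    · rw [hgf]; exact hfE i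
  set loc : (Fin m → R) →ₗ[R] (Fin m → S) :=
    LinearMap.pi (fun i => (Algebra.linearMap R S).comp (LinearMap.proj i)) with hlocdef
  have loc_apply : ∀ v, loc v = fun i => algebraMap R S (v i) := fun v => rfl
  have hlocfun : ⇑loc = (fun (v : Fin m → R) (i : Fin m) => algebraMap R S (v i)) :=
    funext loc_apply
  set Ghat : Fin (t + r) → (Fin m → S) := fun j => loc (g j) with hGhat
  have hlocSub : ∀ N : Submodule R (Fin m → R),
      locSub p N = Submodule.span S (⇑loc '' ↑N) := by
    intro N
    rw [locSub, ← hlocfun]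
  have hEhat : Submodule.span S (Set.range Ghat) = locSub p E := by
    rw [hlocSub]
    apply le_antisymm
    · rw [Submodule.span_le]
      rintro _ ⟨j, rfl⟩
      exact Submodule.subset_span ⟨g j, hgE j, rfl⟩
    · rw [Submodule.span_le]
      rintro _ ⟨v, hv, rfl⟩
      have hv' : v ∈ Submodule.span R (Set.range g) := by
        have hEg : E ≤ Submodule.span R (Set.range g) := by
          rw [← hff]
          apply Submodule.span_mono
          rintro x ⟨i, rfl⟩
          exact ⟨Fin.natAdd t i, by rw [hgf]⟩
        exact hEg hv
      have hmem : loc v ∈ Submodule.map loc (Submodule.span R (Set.range g)) :=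
        Submodule.mem_map_of_mem hv'
      rw [Submodule.map_span] at hmem
      have h2 : Submodule.span R (⇑loc '' Set.range g) ≤
          Submodule.restrictScalars R (Submodule.span S (Set.range Ghat)) := by
        rw [← Set.range_comp]
        exact Submodule.span_le_restrictScalars R S _
      exact h2 hmem
  set Espan := Submodule.span S (Set.range Ghat) with hEspan
  set D := locSub p U ⊔ (IsLocalRing.maximalIdeal S) • Espan with hD
  have hUhat : ∀ j : Fin t, Ghat (Fin.castAdd r j) ∈ locSub p U := by
    intro j
    rw [hlocSub]
    exact Submodule.subset_span ⟨uu j, huU j, (congrArg ⇑loc (hgu j)).symm⟩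
  by_cases hall : ∀ i : Fin r, loc (f i) ∈ D
  · -- colon contradiction
    have hEspanFG : Espan.FG := Submodule.fg_span (Set.finite_range _)
    have hjac : IsLocalRing.maximalIdeal S ≤ (⊥ : Ideal S).jacobson :=
      IsLocalRing.maximalIdeal_le_jacobson ⊥
    have hNN : Espan ≤ locSub p U ⊔ (IsLocalRing.maximalIdeal S) • Espan := by
      rw [hEspan, Submodule.span_le]
      rintro _ ⟨j, rfl⟩
      refine Fin.addCases (fun j' => ?_) (fun i => ?_) j
      · exact Submodule.mem_sup_left (hUhat j')
      · show loc (g (Fin.natAdd t i)) ∈ (locSub p U ⊔ (IsLocalRing.maximalIdeal S) • Espan : Submodule S _)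
        rw [hgf i]
        exact hall i
    have hEle : Espan ≤ locSub p U :=
      Submodule.le_of_le_smul_of_le_jacobson_bot hEspanFG hjac hNN
    have hfloc : ∀ i : Fin r, ∃ s : p.asIdeal.primeCompl, (s : R) • (f i) ∈ U := by
      intro i
      apply mem_span_loc
      have hmem : loc (f i) ∈ locSub p U := by
        apply hEle
        rw [hEspan]
        exact Submodule.subset_span ⟨Fin.natAdd t i, congrArg ⇑loc (hgf i)⟩
      rw [hlocSub] at hmem
      exact hmem
    choose sel hsel using hfloc
    set sbig : p.asIdeal.primeCompl := ∏ i : Fin r, sel i with hsbig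
    have hsmem : (sbig : R) ∈ U.colon E := by
      rw [Submodule.mem_colon]
      intro x hx
      have hxE : x ∈ Submodule.span R (Set.range f) := hff ▸ hx
      have hsub : Submodule.span R (Set.range f) ≤
          Submodule.comap (LinearMap.lsmul R (Fin m → R) (sbig : R)) U := by
        rw [Submodule.span_le]
        rintro _ ⟨i, rfl⟩
        simp only [Set.mem_setOf_eq, SetLike.mem_coe, Submodule.mem_comap,
          LinearMap.lsmul_apply]
        obtain ⟨d, hd⟩ := Finset.dvd_prod_of_mem (fun i => ((sel i : R)))
          (Finset.mem_univ i)
        have hcast : (sbig : R) = (sel i : R) * d := by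
          rw [hsbig]
          push_cast
          exact hd
        rw [hcast, mul_comm, mul_smul]
        exact U.smul_mem _ (hsel i)
      exact hsub hxE
    exact sbig.2 (hple hsmem)
  · push_neg at hall
    obtain ⟨i0, hi0⟩ := hall
    -- the integral equation for toPoly (f i0)
    set x0 : MvPolynomial (Fin m) R := toPoly R m (f i0) with hx0
    have hx0mem : x0 ∈ reesAlg E := Algebra.subset_adjoin ⟨f i0, hfE i0, rfl⟩
    obtain ⟨P, hPmon, hPeval⟩ := hint x0 hx0mem
    set n := P.natDegree with hn
    -- lift the coefficients to polynomials in the U-variables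
    have hcoe : ∀ i : ℕ, ∃ b : MvPolynomial (Fin t) R,
        MvPolynomial.aeval (fun j => toPoly R m (uu j)) b
          = (P.coeff i : MvPolynomial (Fin m) R) := by
      intro i
      have hsub : reesAlg U ≤ (MvPolynomial.aeval (R := R)
          (fun j => toPoly R m (uu j))).range := by
        rw [← Algebra.adjoin_range_eq_range_aeval]
        apply Algebra.adjoin_le
        rintro _ ⟨v, hvU, rfl⟩
        have hv : v ∈ Submodule.span R (Set.range uu) := by
          rw [huu]; exact hvU
        have hmem : toPoly R m v ∈ Submodule.map (toPoly R m)
            (Submodule.span R (Set.range uu)) := Submodule.mem_map_of_mem hv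
        rw [Submodule.map_span] at hmem
        have h2 : Submodule.span R (⇑(toPoly R m) '' Set.range uu) ≤
            Subalgebra.toSubmodule (Algebra.adjoin R
              (Set.range fun j => toPoly R m (uu j))) := by
          rw [Submodule.span_le]
          rintro _ ⟨_, ⟨j, rfl⟩, rfl⟩
          exact Algebra.subset_adjoin ⟨j, rfl⟩
        exact h2 hmem
      exact hsub (P.coeff i).2
    set b : ℕ → MvPolynomial (Fin t) R := fun i => if i = n then 1 else (hcoe i).choose
      with hbdef
    have hb : ∀ i, MvPolynomial.aeval (fun j => toPoly R m (uu j)) (b i)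
        = (P.coeff i : MvPolynomial (Fin m) R) := by
      intro i
      by_cases hi : i = n
      · rw [hi]
        have hbn : b n = 1 := by simp only [hbdef, if_pos rfl]
        rw [hbn, map_one]
        have h1 : P.coeff P.natDegree = 1 := Polynomial.Monic.coeff_natDegree hPmon
        rw [← hn] at h1
        rw [h1, OneMemClass.coe_one]
      · simp only [hbdef, if_neg hi]
        exact (hcoe i).choose_spec
    set j0 : Fin (t + r) := Fin.natAdd t i0 with hj0
    set F : MvPolynomial (Fin (t + r)) R :=
      ∑ i ∈ Finset.range (n + 1),
        MvPolynomial.rename (Fin.castAdd r) (b i) * MvPolynomial.X j0 ^ i with hF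
    have hFR : mapOfGens (t + r) g F = 0 := by
      rw [hF, map_sum]
      have hterm : ∀ i ∈ Finset.range (n + 1),
          (mapOfGens (t + r) g) (MvPolynomial.rename (Fin.castAdd r) (b i)
            * MvPolynomial.X j0 ^ i)
          = (P.coeff i : MvPolynomial (Fin m) R) * x0 ^ i := by
        intro i _
        rw [map_mul, map_pow]
        congr 1
        · rw [mapOfGens, MvPolynomial.aeval_rename]
          have hcmp : ((fun j => toPoly R m (g j)) ∘ Fin.castAdd r)
              = fun j => toPoly R m (uu j) := by
            funext j
            simp only [Function.comp_apply, hgu j]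
          rw [hcmp, hb i]
        · rw [mapOfGens, MvPolynomial.aeval_X]
          rw [hj0, hgf i0]
      rw [Finset.sum_congr rfl hterm]
      have hPe : ∑ i ∈ Finset.range (n + 1),
          (P.coeff i : MvPolynomial (Fin m) R) * x0 ^ i = 0 := by
        have h := hPeval
        rw [Polynomial.eval₂_eq_sum_range] at h
        exact h
      exact hPe
    -- push to the localization
    have hcomm : (mapOfGens (t + r) Ghat).toRingHom.comp
        (MvPolynomial.map (algebraMap R S))
        = (MvPolynomial.map (algebraMap R S)).comp (mapOfGens (t + r) g).toRingHom := by
      apply MvPolynomial.ringHom_ext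
      · intro rr
        simp [mapOfGens, MvPolynomial.algebraMap_eq]
      · intro j
        simp only [RingHom.comp_apply, MvPolynomial.map_X, AlgHom.toRingHom_eq_coe,
          RingHom.coe_coe]
        rw [mapOfGens, mapOfGens, MvPolynomial.aeval_X, MvPolynomial.aeval_X]
        rw [map_toPoly]
        rfl
    have hFhat : (MvPolynomial.map (algebraMap R S)) F ∈
        RingHom.ker (mapOfGens (t + r) Ghat).toRingHom := by
      rw [RingHom.mem_ker]
      have hc := congrArg (fun φ : MvPolynomial (Fin (t + r)) R →+* MvPolynomial (Fin m) S
        => φ F) hcomm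
      simp only [RingHom.comp_apply] at hc
      have hc' : (mapOfGens (t + r) Ghat) ((MvPolynomial.map (algebraMap R S)) F)
          = (MvPolynomial.map (algebraMap R S)) ((mapOfGens (t + r) g) F) := hc
      show (mapOfGens (t + r) Ghat) ((MvPolynomial.map (algebraMap R S)) F) = 0
      rw [hc', hFR, map_zero]
    rw [hlin (t + r) Ghat hEhat] at hFhat
    -- residue field linear algebra
    set κ := IsLocalRing.ResidueField S with hκ
    set ρ : S →+* κ := IsLocalRing.residue S with hρ
    set ρπ : (Fin (t + r) → S) →ₗ[S] (Fin (t + r) → κ) :=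
      LinearMap.pi (fun j => (Algebra.linearMap S κ).comp (LinearMap.proj j)) with hρπ
    have ρπ_apply : ∀ (v : Fin (t + r) → S) (j), ρπ v j = ρ (v j) := by
      intro v j
      show algebraMap S κ (v j) = ρ (v j)
      rw [hρ, IsLocalRing.ResidueField.algebraMap_eq]
    have hAsm : ∀ (cc : κ) {a : Fin (t + r) → κ},
        a ∈ Submodule.map ρπ (LinearMap.ker (funComb (t + r) Ghat)) →
        cc • a ∈ Submodule.map ρπ (LinearMap.ker (funComb (t + r) Ghat)) := by
      rintro cc _ ⟨v, hv, rfl⟩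
      obtain ⟨s, rfl⟩ := IsLocalRing.residue_surjective (R := S) cc
      refine ⟨s • v, Submodule.smul_mem _ _ hv, ?_⟩
      rw [map_smul]
      funext j
      rw [Pi.smul_apply, Pi.smul_apply, Algebra.smul_def, smul_eq_mul,
        IsLocalRing.ResidueField.algebraMap_eq]
    set Aκ : Submodule κ (Fin (t + r) → κ) :=
      { carrier := (Submodule.map ρπ (LinearMap.ker (funComb (t + r) Ghat)) : Set _)
        add_mem' := fun ha hb => Submodule.add_mem _ ha hb
        zero_mem' := Submodule.zero_mem _
        smul_mem' := fun cc a ha => hAsm cc ha } with hAκ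
    set Bκ : Submodule κ (Fin (t + r) → κ) :=
      Submodule.span κ (Set.range fun j : Fin t => Pi.single (Fin.castAdd r j) (1 : κ))
      with hBκ
    set W := Aκ ⊔ Bκ with hW
    have hBvan : ∀ x ∈ Bκ, ∀ i : Fin r, x (Fin.natAdd t i) = 0 := by
      intro x hx
      induction hx using Submodule.span_induction with
      | mem x hxs =>
        obtain ⟨j, rfl⟩ := hxs
        intro i
        apply Pi.single_eq_of_ne
        intro hcontra
        have := congrArg Fin.val hcontra
        simp only [Fin.coe_natAdd, Fin.coe_castAdd] at this
        omega
      | zero => intro i; rfl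
      | add x y _ _ hx hy => intro i; rw [Pi.add_apply, hx i, hy i, add_zero]
      | smul a x _ hx => intro i; rw [Pi.smul_apply, hx i, smul_zero]
    have hj0W : Pi.single j0 (1 : κ) ∉ W := by
      intro hmem
      rw [hW] at hmem
      obtain ⟨a, ha, bb, hbb, hab⟩ := Submodule.mem_sup.mp hmem
      obtain ⟨v, hvker, hveq⟩ := ha
      have hval : ∀ jj, ρ (v jj) + bb jj = (Pi.single j0 (1 : κ) : Fin (t + r) → κ) jj := by
        intro jj
        have hcf := congrFun hab jj
        rw [Pi.add_apply] at hcf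
        rw [← hcf, ← hveq, ρπ_apply]
      have hv1 : ρ (v j0) = 1 := by
        have h1 := hval j0
        rw [hj0] at h1
        rw [hBvan bb hbb i0] at h1
        rw [add_zero] at h1
        rw [Pi.single_eq_same] at h1
        rw [hj0]
        exact h1
      have hv0 : ∀ i : Fin r, i ≠ i0 → ρ (v (Fin.natAdd t i)) = 0 := by
        intro i hi
        have h1 := hval (Fin.natAdd t i)
        rw [hBvan bb hbb i, add_zero] at h1
        rw [Pi.single_eq_of_ne] at h1
        · exact h1
        · intro hcontra
          rw [hj0] at hcontra
          have := congrArg Fin.val hcontra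
          simp only [Fin.coe_natAdd] at this
          exact hi (Fin.ext (by omega))
      have hunit : IsUnit (v j0) := by
        rw [← IsLocalRing.notMem_maximalIdeal]
        intro hmm
        have : ρ (v j0) = 0 := Ideal.Quotient.eq_zero_iff_mem.mpr hmm
        rw [hv1] at this
        exact one_ne_zero this
      have hker0 : (∑ j : Fin t, v (Fin.castAdd r j) • Ghat (Fin.castAdd r j))
          + ∑ i : Fin r, v (Fin.natAdd t i) • Ghat (Fin.natAdd t i) = 0 := by
        have hk := LinearMap.mem_ker.mp hvker
        rw [funComb_apply'] at hk
        rw [Fin.sum_univ_add] at hk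
        exact hk
      have hsplit : v j0 • Ghat j0
          + ∑ i ∈ Finset.univ.erase i0, v (Fin.natAdd t i) • Ghat (Fin.natAdd t i)
          = ∑ i : Fin r, v (Fin.natAdd t i) • Ghat (Fin.natAdd t i) := by
        rw [hj0]
        exact Finset.add_sum_erase Finset.univ
          (fun i => v (Fin.natAdd t i) • Ghat (Fin.natAdd t i)) (Finset.mem_univ i0)
      have hsum0 : v j0 • Ghat j0
          + ((∑ j : Fin t, v (Fin.castAdd r j) • Ghat (Fin.castAdd r j))
            + ∑ i ∈ Finset.univ.erase i0, v (Fin.natAdd t i) • Ghat (Fin.natAdd t i)) = 0 := by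
        rw [← hsplit] at hker0
        rw [← hker0]
        abel
      have hDmem : v j0 • Ghat j0 ∈ D := by
        rw [eq_neg_of_add_eq_zero_left hsum0]
        apply D.neg_mem
        apply D.add_mem
        · apply Submodule.sum_mem
          intro j _
          rw [hD]
          exact Submodule.mem_sup_left (Submodule.smul_mem _ _ (hUhat j))
        · apply Submodule.sum_mem
          intro i hi
          rw [hD]
          apply Submodule.mem_sup_right
          apply Submodule.smul_mem_smul
          · exact Ideal.Quotient.eq_zero_iff_mem.mp (hv0 i (Finset.ne_of_mem_erase hi))
          · exact Submodule.subset_span ⟨Fin.natAdd t i, rfl⟩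
      apply hi0
      have hsm : (((hunit.unit⁻¹ : Sˣ) : S)) • (v j0 • Ghat j0) ∈ D :=
        D.smul_mem _ hDmem
      have heq2 : (((hunit.unit⁻¹ : Sˣ) : S)) • (v j0 • Ghat j0) = Ghat j0 := by
        rw [smul_smul]
        rw [IsUnit.val_inv_mul hunit, one_smul]
      rw [heq2] at hsm
      have : Ghat j0 = loc (f i0) := by
        rw [hj0]
        exact congrArg ⇑loc (hgf i0)
      rwa [this] at hsm
    -- choose a linear functional vanishing on W but not at single j0 1
    have hmkne : (Submodule.Quotient.mk (Pi.single j0 (1 : κ)) : (Fin (t + r) → κ) ⧸ W) ≠ 0 := by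
      rwa [Ne, Submodule.Quotient.mk_eq_zero]
    obtain ⟨ψ, hψ⟩ : ∃ ψ : Module.Dual κ ((Fin (t + r) → κ) ⧸ W),
        ψ (Submodule.Quotient.mk (Pi.single j0 (1 : κ))) ≠ 0 := by
      by_contra hcon
      push_neg at hcon
      exact hmkne ((Module.forall_dual_apply_eq_zero_iff κ _).mp hcon)
    set φ : (Fin (t + r) → κ) →ₗ[κ] κ := ψ.comp W.mkQ with hφ
    set c : Fin (t + r) → κ := fun j => φ (Pi.single j 1) with hc
    have hφW : ∀ w ∈ W, φ w = 0 := by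
      intro w hw
      have : W.mkQ w = 0 := (Submodule.Quotient.mk_eq_zero W).mpr hw
      rw [hφ, LinearMap.comp_apply, this, map_zero]
    have hφsum : ∀ x : Fin (t + r) → κ, φ x = ∑ j, x j * c j := by
      intro x
      have hx : x = ∑ j, x j • (Pi.single j (1 : κ) : Fin (t + r) → κ) := by
        calc x = ∑ j, (Pi.single j (x j) : Fin (t + r) → κ) := (Finset.univ_sum_single x).symm
          _ = ∑ j, x j • (Pi.single j (1 : κ) : Fin (t + r) → κ) := by
              refine Finset.sum_congr rfl fun j _ => ?_
              rw [← Pi.single_smul, smul_eq_mul, mul_one]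
      conv_lhs => rw [hx]
      rw [map_sum]
      refine Finset.sum_congr rfl fun j _ => ?_
      rw [map_smul, smul_eq_mul, hc]
    have hcU : ∀ j : Fin t, c (Fin.castAdd r j) = 0 := by
      intro j
      rw [hc]
      refine hφW _ ?_
      have : (Pi.single (Fin.castAdd r j) (1 : κ) : Fin (t + r) → κ) ∈ Bκ :=
        Submodule.subset_span ⟨j, rfl⟩
      rw [hW]
      exact Submodule.mem_sup_right this
    have hcj0 : c j0 ≠ 0 := by
      rw [hc]
      exact hψ
    have hcker : ∀ v ∈ LinearMap.ker (funComb (t + r) Ghat),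
        ∑ j, ρ (v j) * c j = 0 := by
      intro v hv
      have hmem : ρπ v ∈ W := by
        rw [hW]
        exact Submodule.mem_sup_left (⟨v, hv, rfl⟩ : ρπ v ∈ Aκ)
      have h0 : φ (ρπ v) = 0 := hφW _ hmem
      rw [hφsum] at h0
      rw [← h0]
      refine Finset.sum_congr rfl fun j _ => ?_
      rw [ρπ_apply]
    -- the evaluation homomorphism to κ[X]
    set Ψ : MvPolynomial (Fin (t + r)) S →+* Polynomial κ :=
      MvPolynomial.eval₂Hom (Polynomial.C.comp ρ) (fun j => c j • Polynomial.X) with hΨ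
    have hΨC : ∀ s : S, Ψ (MvPolynomial.C s) = Polynomial.C (ρ s) := by
      intro s
      rw [hΨ, MvPolynomial.eval₂Hom_C, RingHom.comp_apply]
    have hΨX : ∀ j, Ψ (MvPolynomial.X j) = c j • Polynomial.X := by
      intro j
      rw [hΨ]
      exact MvPolynomial.eval₂Hom_X' _ _ _
    have hΨgen : ∀ z ∈ (⇑(toPoly S (t + r)) ''
        ((LinearMap.ker (funComb (t + r) Ghat) : Submodule S _) : Set _)), Ψ z = 0 := by
      rintro _ ⟨v, hv, rfl⟩
      rw [toPoly_apply', map_sum]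
      have hterm : ∀ j ∈ Finset.univ, Ψ (MvPolynomial.C (v j) * MvPolynomial.X j)
          = (ρ (v j) * c j) • Polynomial.X := by
        intro j _
        rw [map_mul, hΨC, hΨX]
        rw [Polynomial.smul_eq_C_mul, Polynomial.smul_eq_C_mul, map_mul]
        ring
      rw [Finset.sum_congr rfl hterm, ← Finset.sum_smul, hcker v hv, zero_smul]
    have hΨF : Ψ ((MvPolynomial.map (algebraMap R S)) F) = 0 := by
      have hmap := Ideal.mem_map_of_mem Ψ hFhat
      rw [Ideal.map_span] at hmap
      have hle : Ideal.span (⇑Ψ '' (⇑(toPoly S (t + r)) ''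
          ((LinearMap.ker (funComb (t + r) Ghat) : Submodule S _) : Set _))) ≤ ⊥ := by
        rw [Ideal.span_le]
        rintro _ ⟨z, hz, rfl⟩
        rw [SetLike.mem_coe, Ideal.mem_bot]
        exact hΨgen z hz
      exact Ideal.mem_bot.mp (hle hmap)
    -- compute the image explicitly
    have hcomp : Ψ ((MvPolynomial.map (algebraMap R S)) F)
        = ∑ i ∈ Finset.range (n + 1),
            Polynomial.C (ρ (algebraMap R S (MvPolynomial.constantCoeff (b i)))) *
              (c j0 • Polynomial.X) ^ i := by
      rw [hF, map_sum, map_sum]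
      refine Finset.sum_congr rfl fun i _ => ?_
      rw [map_mul, map_pow, map_mul, map_pow, MvPolynomial.map_X, hΨX]
      congr 1
      rw [MvPolynomial.map_rename]
      have hrn : Ψ ((MvPolynomial.rename (Fin.castAdd r))
          ((MvPolynomial.map (algebraMap R S)) (b i)))
          = MvPolynomial.eval₂ (Polynomial.C.comp ρ)
            ((fun j => c j • Polynomial.X) ∘ (Fin.castAdd r))
            ((MvPolynomial.map (algebraMap R S)) (b i)) := by
        exact MvPolynomial.eval₂_rename _ _ _ _
      rw [hrn]
      have hzero : ((fun j => c j • Polynomial.X) ∘ (Fin.castAdd r))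
          = fun _ : Fin t => (0 : Polynomial κ) := by
        funext j
        simp only [Function.comp_apply, hcU j, zero_smul]
      rw [hzero, eval₂_zero_vars, MvPolynomial.constantCoeff_map]
      rfl
    rw [hcomp] at hΨF
    have hcoeffn := congrArg (fun q : Polynomial κ => q.coeff n) hΨF
    simp only [Polynomial.coeff_zero] at hcoeffn
    rw [Polynomial.finset_sum_coeff] at hcoeffn
    rw [Finset.sum_eq_single n] at hcoeffn
    · -- hcoeffn : coefficient = 0 ; but it is c j0 ^ n
      have hbn : b n = 1 := by simp only [hbdef, if_pos rfl]
      rw [hbn] at hcoeffn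
      rw [map_one, map_one, map_one, map_one] at hcoeffn
      rw [one_mul, smul_pow, Polynomial.coeff_smul, Polynomial.coeff_X_pow, if_pos rfl,
        smul_eq_mul, mul_one] at hcoeffn
      rcases Nat.eq_zero_or_pos n with hn0 | hpos
      · rw [hn0, pow_zero] at hcoeffn
        exact one_ne_zero hcoeffn
      · exact hcj0 ((pow_eq_zero_iff (Nat.pos_iff_ne_zero.mp hpos)).mp hcoeffn)
    · intro i hi hne
      rw [smul_pow, Polynomial.coeff_C_mul, Polynomial.coeff_smul, Polynomial.coeff_X_pow,
        if_neg (fun hh => hne hh.symm), smul_eq_mul, mul_zero, mul_zero]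
    · intro hnot
      exact absurd (Finset.self_mem_range_succ n) hnot





end Helpers

/-- Remark 2.4. Let `(R,m)` be Noetherian local with infinite residue
field, `E` (realized as a submodule of a free module) a finitely generated module with
rank `e` and analytic spread `ℓ`, admitting a proper reduction. If `U` is a minimal
reduction of `E` and `E_p` is of linear type for all primes `p` with `ht p ≤ ℓ - e`,
then `ht (U :_R E) ≥ ℓ - e + 1`, i.e. `(U :_R E)` is an `ℓ`-residual intersection. -/
theorem colon_of_min_reduction_is_residual_intersection {R : Type u} [CommRing R]
    [IsLocalRing R] [IsNoetherianRing R] (hk : Infinite (IsLocalRing.ResidueField R))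
    {m : ℕ} (E : Submodule R (Fin m → R)) [Module.Finite R ↥E]
    (e ℓ : ℕ) (hrk : Module.HasRank R ↥E e) (hl : analyticSpread E = (ℓ : WithBot ℕ∞))
    (hproper : ∃ V : Submodule R (Fin m → R), IsReductionOf V E ∧ V ≠ E)
    (U : Submodule R (Fin m → R)) (hU : IsMinimalReductionOf U E)
    (hlt : ∀ p : PrimeSpectrum R, Order.height p ≤ (ℓ - e : ℕ) →
      IsLinearTypeSub (locSub p E)) :
    (ℓ : ℕ∞) + 1 ≤ (U.colon E).ht + e := by
  by_contra hcon
  push_neg at hcon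
  have hle : (U.colon E).ht + (e : ℕ∞) ≤ (ℓ : ℕ∞) :=
    (ENat.lt_add_one_iff (ENat.coe_ne_top ℓ)).mp hcon
  have heℓ : e ≤ ℓ := by
    have h1 : (e : ℕ∞) ≤ (ℓ : ℕ∞) := le_trans le_add_self hle
    exact_mod_cast h1
  have hht : (U.colon E).ht ≤ ((ℓ - e : ℕ) : ℕ∞) := by
    rw [ENat.coe_sub]
    exact ENat.le_sub_of_add_le_left (ENat.coe_ne_top e) (by rwa [add_comm] at hle)
  have hlt2 : (U.colon E).ht < ((ℓ - e : ℕ) : ℕ∞) + 1 :=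
    lt_of_le_of_lt hht ((ENat.lt_add_one_iff (ENat.coe_ne_top _)).mpr le_rfl)
  unfold Ideal.ht at hlt2
  obtain ⟨p, hp⟩ := iInf_lt_iff.mp hlt2
  obtain ⟨hple, hp2⟩ := iInf_lt_iff.mp hp
  have hhtp : Order.height p ≤ ((ℓ - e : ℕ) : ℕ∞) :=
    (ENat.lt_add_one_iff (ENat.coe_ne_top _)).mp hp2
  exact key_no_small_prime hU.1.1 hU.1.2 p hple (hlt p hhtp)

end
end

section
/- Let R be a Noetherian local ring with infinite residue field, E a finitely generated R-module with a rank, and suppose (U :_R E)E = core(E) holds for every minimal reduction U of E. Then the colon ideal (U :_R E) is independent of the minimal reduction U: for any two minimal reductions U_1, U_2 of E, (U_1 :_R E) = (U_2 :_R E). -/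
noncomputable section
open Submodule IsLocalRing

universe u

/-- (ii) ⇒ (iii) in Theorem 4.3. Over a Noetherian local ring with
infinite residue field, if `(U :_R E) E = core(E)` for every minimal reduction `U` of
`E`, then the colon ideal `(U :_R E)` is independent of the minimal reduction `U`. -/
theorem colon_independent_of_min_reduction {R : Type u} [CommRing R] [IsLocalRing R]
    [IsNoetherianRing R] (hk : Infinite (IsLocalRing.ResidueField R))
    {m : ℕ} (E : Submodule R (Fin m → R)) [Module.Finite R ↥E]
    (e : ℕ) (hrk : Module.HasRank R ↥E e)
    (hcore : ∀ U : Submodule R (Fin m → R), IsMinimalReductionOf U E →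
      (U.colon E) • E = coreMod E) :
    ∀ U₁ U₂ : Submodule R (Fin m → R), IsMinimalReductionOf U₁ E →
      IsMinimalReductionOf U₂ E → U₁.colon E = U₂.colon E := by
  have key : ∀ V W : Submodule R (Fin m → R), IsMinimalReductionOf V E →
      IsMinimalReductionOf W E → V.colon E ≤ W.colon E := by
    intro V W hV hW r hr
    rw [Submodule.mem_colon]
    intro p hp
    have hmem : r • p ∈ (V.colon E) • E := Submodule.smul_mem_smul hr hp
    rw [hcore V hV] at hmem
    have hle : coreMod E ≤ W := sInf_le (show W ∈ {U | IsReductionOf U E} from hW.1)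
    exact hle hmem
  exact fun U₁ U₂ h₁ h₂ => le_antisymm (key U₁ U₂ h₁ h₂) (key U₂ U₁ h₂ h₁)

end
end
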